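/- arXiv:2109.10749 — 2 statements merged into one kernel-verified Lean document; each statement's English description precedes it below -/
import Mathlib

section
/- For every finite poset P, the stem-event stem(P) = {D̃ ∈ Ω̃_ℤ : there exists a finite subset S ⊆ ℤ that is downward closed in D̃ (y ≺ x ∈ S implies y ∈ S) and whose induced order is order-isomorphic to P} belongs to the σ-algebra Σ_cyl generated by the cylinder sets. -/
/-- A labeled causet with ground set ℤ: a strict partial order `r` on ℤ with
`r x y → x < y` (transitivity plus this condition make it a strict order,
automatically locally finite). -/
def OmegaZ : Type :=
  {r : ℤ → ℤ → Prop // Transitive r ∧ ∀ x y : ℤ, r x y → x < y}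

/-- The integer intervals `[-n, n]` and `[-n, n+1]`, `n ≥ 0`. -/
def IsPoscauInterval (I : Set ℤ) : Prop :=
  ∃ n : ℕ, I = Set.Icc (-(n : ℤ)) (n : ℤ) ∨ I = Set.Icc (-(n : ℤ)) ((n : ℤ) + 1)

/-- The cylinder set of a partial order `c` on the interval `I`: those `D ∈ Ω̃_ℤ`
whose restriction to `I` equals `c` and for which `I` is convex in `D`. -/
def cyl (I : Set ℤ) (c : ℤ → ℤ → Prop) : Set OmegaZ :=
  {D | (∀ x ∈ I, ∀ y ∈ I, (D.1 x y ↔ c x y)) ∧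
       (∀ x ∈ I, ∀ y ∈ I, ∀ z : ℤ, D.1 x z → D.1 z y → z ∈ I)}

/-- The collection of all cylinder sets. -/
def cylSets : Set (Set OmegaZ) :=
  {S | ∃ (I : Set ℤ) (c : ℤ → ℤ → Prop), IsPoscauInterval I ∧ Transitive c ∧
    (∀ x y : ℤ, c x y → x ∈ I ∧ y ∈ I ∧ x < y) ∧ S = cyl I c}

/-- The σ-algebra generated by the cylinder sets. -/
def SigmaCyl : MeasurableSpace OmegaZ := MeasurableSpace.generateFrom cylSets

lemma basic_measurable (a b : ℤ) :
    @MeasurableSet OmegaZ SigmaCyl {D : OmegaZ | D.1 a b} := by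
  classical
  set n : ℕ := max a.natAbs b.natAbs with hn
  set I : Set ℤ := Set.Icc (-(n : ℤ)) (n : ℤ) with hI
  have habs : ∀ x : ℤ, x.natAbs ≤ n → x ∈ I := by
    intro x hx
    have h1 : |x| ≤ (n : ℤ) := by
      rw [Int.abs_eq_natAbs]; exact_mod_cast hx
    rw [hI, Set.mem_Icc]
    constructor <;> [linarith [neg_abs_le x]; linarith [le_abs_self x]]
  have ha : a ∈ I := habs a (le_max_left _ _)
  have hb : b ∈ I := habs b (le_max_right _ _)
  have key : {D : OmegaZ | D.1 a b} =
      ⋃ s : Finset (ℤ × ℤ), ⋃ (_ : Transitive (fun x y => (x, y) ∈ s) ∧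
        (∀ x y : ℤ, (x, y) ∈ s → x ∈ I ∧ y ∈ I ∧ x < y) ∧ (a, b) ∈ s),
        cyl I (fun x y => (x, y) ∈ s) := by
    ext D
    simp only [Set.mem_iUnion, Set.mem_setOf_eq]
    constructor
    · intro hD
      set s : Finset (ℤ × ℤ) :=
        (Finset.Icc (-(n : ℤ)) (n : ℤ) ×ˢ Finset.Icc (-(n : ℤ)) (n : ℤ)).filter
          (fun p => D.1 p.1 p.2) with hs
      have hmem : ∀ x y : ℤ, ((x, y) ∈ s) ↔ (x ∈ I ∧ y ∈ I ∧ D.1 x y) := by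
        intro x y
        simp only [hs, Finset.mem_filter, Finset.mem_product, Finset.mem_Icc, hI,
          Set.mem_Icc]
        tauto
      refine ⟨s, ⟨?_, ?_, ?_⟩, ?_, ?_⟩
      · intro x y z hxy hyz
        simp only [hmem] at *
        exact ⟨hxy.1, hyz.2.1, D.2.1 hxy.2.2 hyz.2.2⟩
      · intro x y hxy
        rw [hmem] at hxy
        exact ⟨hxy.1, hxy.2.1, D.2.2 _ _ hxy.2.2⟩
      · exact (hmem a b).mpr ⟨ha, hb, hD⟩
      · intro x hx y hy
        simp only [hmem]
        tauto
      · intro x hx y hy z hxz hzy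
        have h1 := D.2.2 _ _ hxz
        have h2 := D.2.2 _ _ hzy
        rw [hI, Set.mem_Icc] at *
        constructor <;> linarith [hx.1, hy.2]
    · rintro ⟨s, ⟨-, -, hab⟩, hres, -⟩
      exact (hres a ha b hb).mpr hab
  rw [key]
  refine MeasurableSet.iUnion fun s => MeasurableSet.iUnion fun hs => ?_
  exact MeasurableSpace.measurableSet_generateFrom
    ⟨I, fun x y => (x, y) ∈ s, ⟨n, Or.inl rfl⟩, hs.1, hs.2.1, rfl⟩

/-- For every finite poset P, the stem-event stem(P) — the set of
labeled causets on ℤ containing a finite downward-closed subset whose induced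
order is order-isomorphic to P — belongs to the σ-algebra generated by the
cylinder sets. -/
theorem stmt_4 (P : Type*) [Fintype P] [PartialOrder P] :
    @MeasurableSet OmegaZ SigmaCyl
      {D : OmegaZ | ∃ S : Set ℤ, S.Finite ∧
        (∀ x ∈ S, ∀ y : ℤ, D.1 y x → y ∈ S) ∧
        ∃ g : S ≃ P, ∀ a b : S, D.1 a.1 b.1 ↔ g a < g b} := by
  classical
  have key : {D : OmegaZ | ∃ S : Set ℤ, S.Finite ∧
        (∀ x ∈ S, ∀ y : ℤ, D.1 y x → y ∈ S) ∧
        ∃ g : S ≃ P, ∀ a b : S, D.1 a.1 b.1 ↔ g a < g b} =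
      ⋃ T : Finset ℤ, ⋃ g : {x // x ∈ T} ≃ P,
        ({D : OmegaZ | ∀ x ∈ T, ∀ y : ℤ, D.1 y x → y ∈ T} ∩
         {D : OmegaZ | ∀ a b : {x // x ∈ T}, D.1 a.1 b.1 ↔ g a < g b}) := by
    ext D
    simp only [Set.mem_iUnion, Set.mem_setOf_eq, Set.mem_inter_iff]
    constructor
    · rintro ⟨S, hfin, hdc, g, hg⟩
      refine ⟨hfin.toFinset,
        (Equiv.subtypeEquivRight (fun x => hfin.mem_toFinset)).trans g, ?_, ?_⟩
      · intro x hx y hyx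
        exact hfin.mem_toFinset.mpr (hdc x (hfin.mem_toFinset.mp hx) y hyx)
      · intro a b
        exact hg ⟨a.1, hfin.mem_toFinset.mp a.2⟩ ⟨b.1, hfin.mem_toFinset.mp b.2⟩
    · rintro ⟨T, g, hdc, hg⟩
      refine ⟨(↑T : Set ℤ), T.finite_toSet, ?_,
        (Equiv.subtypeEquivRight (fun x => Finset.mem_coe)).trans g, ?_⟩
      · intro x hx y hyx
        exact hdc x hx y hyx
      · intro a b
        exact hg ⟨a.1, a.2⟩ ⟨b.1, b.2⟩
  rw [key]
  refine MeasurableSet.iUnion fun T => MeasurableSet.iUnion fun g =>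
    MeasurableSet.inter ?_ ?_
  · have h1 : {D : OmegaZ | ∀ x ∈ T, ∀ y : ℤ, D.1 y x → y ∈ T} =
        ⋂ x : ℤ, ⋂ y : ℤ, {D : OmegaZ | x ∈ T → D.1 y x → y ∈ T} := by
      ext D; simp only [Set.mem_iInter, Set.mem_setOf_eq]; tauto
    rw [h1]
    refine MeasurableSet.iInter fun x => MeasurableSet.iInter fun y => ?_
    by_cases hx : x ∈ T
    · by_cases hy : y ∈ T
      · have : {D : OmegaZ | x ∈ T → D.1 y x → y ∈ T} = Set.univ := by
          ext D; simp [hx, hy]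
        rw [this]; exact MeasurableSet.univ
      · have : {D : OmegaZ | x ∈ T → D.1 y x → y ∈ T} = {D : OmegaZ | D.1 y x}ᶜ := by
          ext D; simp [hx, hy]
        rw [this]; exact (basic_measurable y x).compl
    · have : {D : OmegaZ | x ∈ T → D.1 y x → y ∈ T} = Set.univ := by
        ext D; simp [hx]
      rw [this]; exact MeasurableSet.univ
  · have h2 : {D : OmegaZ | ∀ a b : {x // x ∈ T}, D.1 a.1 b.1 ↔ g a < g b} =
        ⋂ a : {x // x ∈ T}, ⋂ b : {x // x ∈ T},
          {D : OmegaZ | D.1 a.1 b.1 ↔ g a < g b} := by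
      ext D; simp only [Set.mem_iInter, Set.mem_setOf_eq]
    rw [h2]
    refine MeasurableSet.iInter fun a => MeasurableSet.iInter fun b => ?_
    by_cases h : g a < g b
    · have : {D : OmegaZ | D.1 a.1 b.1 ↔ g a < g b} = {D : OmegaZ | D.1 a.1 b.1} := by
        ext D; simp [h]
      rw [this]; exact basic_measurable _ _
    · have : {D : OmegaZ | D.1 a.1 b.1 ↔ g a < g b} = {D : OmegaZ | D.1 a.1 b.1}ᶜ := by
        ext D; simp [h]
      rw [this]; exact (basic_measurable _ _).compl
end

section
/- Let C_n be an n-element poset that is neither a chain nor an antichain. Then every causet C whose set of n-convex-suborders equals the singleton {[C_n]} has cardinality strictly less than n². -/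
set_option linter.unusedSectionVars false
set_option maxHeartbeats 1000000



/-- A strict partial order on `Fin n` (a representative of an `n`-order). -/
def FinSPO (n : ℕ) : Type :=
  {r : Fin n → Fin n → Prop // Transitive r ∧ ∀ x : Fin n, ¬ r x x}

/-- Order-isomorphism of representatives. -/
def IsoFin {n : ℕ} (p q : FinSPO n) : Prop :=
  ∃ g : Fin n ≃ Fin n, ∀ a b : Fin n, p.1 a b ↔ q.1 (g a) (g b)

/-- An `n`-order: an order-isomorphism class of `n`-element strict partial orders. -/
def NOrder (n : ℕ) : Type := Quot (@IsoFin n)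

/-- The `n`-order represented by `p`. -/
def toNOrder {n : ℕ} (p : FinSPO n) : NOrder n := Quot.mk _ p

/-- `S` is a (finite) convex subset of the causet `(α, r)`. -/
def IsConvexIn {α : Type*} (r : α → α → Prop) (S : Set α) : Prop :=
  S.Finite ∧ ∀ x ∈ S, ∀ y ∈ S, ∀ z : α, r x z → r z y → z ∈ S

/-- The representative `p` is realised by a convex subset of the causet `(α, r)`. -/
def RepConvex {α : Type*} (r : α → α → Prop) {n : ℕ} (p : FinSPO n) : Prop :=
  ∃ g : Fin n → α, Function.Injective g ∧ IsConvexIn r (Set.range g) ∧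
    ∀ a b : Fin n, p.1 a b ↔ r (g a) (g b)

/-- The set of `n`-convex-suborders of the causet `(α, r)`. -/
def convexSubords {α : Type*} (r : α → α → Prop) (n : ℕ) : Set (NOrder n) :=
  {o | ∃ p : FinSPO n, o = toNOrder p ∧ RepConvex r p}

/-- A (finite or countably infinite) causal set: a countable strict partial order
which is locally finite. -/
structure Causet where
  carrier : Type
  rel : carrier → carrier → Prop
  countable : Countable carrier
  trans : Transitive rel
  irrefl : ∀ x : carrier, ¬ rel x x
  locFin : ∀ x y : carrier, {z : carrier | rel x z ∧ rel z y}.Finite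

/-- `C` is a certificate of `Γ`: the set of `n`-convex-suborders of `C` equals `Γ`. -/
def IsCert (C : Causet) {n : ℕ} (Γ : Set (NOrder n)) : Prop :=
  convexSubords C.rel n = Γ

/-- `Γ` is a node of convex-covtree: it has at least one certificate. -/
def IsNodeCC {n : ℕ} (Γ : Set (NOrder n)) : Prop := ∃ C : Causet, IsCert C Γ

/-- `O⁻(Γ)`: the set of `n`-orders represented by convex subsets of representatives
of members of `Γ`. -/
def Ominus {n : ℕ} (Γ : Set (NOrder (n + 1))) : Set (NOrder n) :=
  {o | ∃ q : FinSPO n, o = toNOrder q ∧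
    ∃ p : FinSPO (n + 1), toNOrder p ∈ Γ ∧ RepConvex p.1 q}


section Machinery

variable {α : Type}

def Conv (r : α → α → Prop) (S : Finset α) : Prop :=
  ∀ x ∈ S, ∀ y ∈ S, ∀ z, r x z → r z y → z ∈ S

structure Env (r : α → α → Prop) : Prop where
  tr : Transitive r
  ir : ∀ x, ¬ r x x
  lf : ∀ x y, {z : α | r x z ∧ r z y}.Finite

variable [DecidableEq α] {r : α → α → Prop}

lemma Env.nb (E : Env r) {x y : α} (h1 : r x y) (h2 : r y x) : False :=
  E.ir x (E.tr h1 h2)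

lemma Env.flip (E : Env r) : Env (flip r) := by
  refine ⟨fun a b c h1 h2 => E.tr h2 h1, E.ir, fun x y => ?_⟩
  exact (E.lf y x).subset (fun z hz => ⟨hz.2, hz.1⟩)

lemma conv_flip {S : Finset α} : Conv (flip r) S ↔ Conv r S := by
  constructor <;> intro h x hx y hy z h1 h2
  · exact h y hy x hx z h2 h1
  · exact h y hy x hx z h2 h1

lemma conv_empty : Conv r (∅ : Finset α) := by
  intro x hx; simp at hx

lemma exists_max (E : Env r) (S : Finset α) (hS : S.Nonempty) :
    ∃ m ∈ S, ∀ y ∈ S, ¬ r m y := by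
  classical
  induction S using Finset.strongInduction with
  | _ S ih =>
    obtain ⟨x, hx⟩ := hS
    by_cases hx2 : ∃ y ∈ S, r x y
    · obtain ⟨y, hy, hxy⟩ := hx2
      have hFs : S.filter (fun z => r x z) ⊂ S := by
        refine ⟨Finset.filter_subset _ _, fun hsub => ?_⟩
        have := hsub hx
        simp only [Finset.mem_filter] at this
        exact E.ir x this.2
      have hFne : (S.filter (fun z => r x z)).Nonempty := ⟨y, by simp [hy, hxy]⟩
      obtain ⟨m, hmF, hmax⟩ := ih _ hFs hFne
      simp only [Finset.mem_filter] at hmF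
      refine ⟨m, hmF.1, fun z hz hmz => ?_⟩
      exact hmax z (Finset.mem_filter.2 ⟨hz, E.tr hmF.2 hmz⟩) hmz
    · push_neg at hx2
      exact ⟨x, hx, hx2⟩

lemma conv_erase {S : Finset α} (hS : Conv r S) {m : α} (hm : m ∈ S)
    (hmax : ∀ y ∈ S, ¬ r m y) : Conv r (S.erase m) := by
  intro x hx y hy z h1 h2
  have hz := hS x (Finset.mem_of_mem_erase hx) y (Finset.mem_of_mem_erase hy) z h1 h2
  refine Finset.mem_erase.2 ⟨?_, hz⟩
  rintro rfl
  exact hmax y (Finset.mem_of_mem_erase hy) h2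

/-- shrink a convex set to any size `m`, keeping a designated global minimum. -/
lemma shrink_keep (E : Env r) :
    ∀ (S : Finset α), Conv r S → ∀ a ∈ S, (∀ y ∈ S, y ≠ a → r a y) →
      ∀ m, 1 ≤ m → m ≤ S.card →
        ∃ T ⊆ S, Conv r T ∧ T.card = m ∧ a ∈ T := by
  intro S
  induction S using Finset.strongInduction with
  | _ S ih =>
    intro hS a ha hmin m hm1 hmS
    rcases eq_or_lt_of_le hmS with heq | hlt
    · exact ⟨S, subset_rfl, hS, heq.symm, ha⟩
    · obtain ⟨mx, hmx, hmax⟩ := exists_max E S ⟨a, ha⟩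
      have hne : mx ≠ a := by
        rintro rfl
        have hall : ∀ y ∈ S, y = mx := by
          intro y hy
          by_contra hne'
          exact hmax y hy (hmin y hy hne')
        have : S.card ≤ 1 :=
          Finset.card_le_one.2 (fun u hu v hv => (hall u hu).trans (hall v hv).symm)
        omega
      have hsub : S.erase mx ⊂ S := Finset.erase_ssubset hmx
      have hcard : (S.erase mx).card = S.card - 1 := Finset.card_erase_of_mem hmx
      obtain ⟨T, hT1, hT2, hT3, hT4⟩ := ih _ hsub (conv_erase hS hmx hmax) a
        (Finset.mem_erase.2 ⟨fun h => hne (h ▸ rfl), ha⟩)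
        (fun y hy hya => hmin y (Finset.mem_of_mem_erase hy) hya) m hm1 (by omega)
      exact ⟨T, hT1.trans (Finset.erase_subset _ _), hT2, hT3, hT4⟩

/-- shrink a convex set to any size `m`. -/
lemma shrink_plain (E : Env r) :
    ∀ (S : Finset α), Conv r S → ∀ m, m ≤ S.card →
      ∃ T ⊆ S, Conv r T ∧ T.card = m := by
  intro S
  induction S using Finset.strongInduction with
  | _ S ih =>
    intro hS m hmS
    rcases eq_or_lt_of_le hmS with heq | hlt
    · exact ⟨S, subset_rfl, hS, heq.symm⟩
    · have hne : S.Nonempty := Finset.card_pos.1 (by omega)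
      obtain ⟨mx, hmx, hmax⟩ := exists_max E S hne
      have hsub : S.erase mx ⊂ S := Finset.erase_ssubset hmx
      have hcard : (S.erase mx).card = S.card - 1 := Finset.card_erase_of_mem hmx
      obtain ⟨T, hT1, hT2, hT3⟩ := ih _ hsub (conv_erase hS hmx hmax) m (by omega)
      exact ⟨T, hT1.trans (Finset.erase_subset _ _), hT2, hT3⟩



/-- closed interval -/
noncomputable def intCC (E : Env r) (a b : α) : Finset α :=
  insert a (insert b (E.lf a b).toFinset)

lemma mem_intCC {E : Env r} {a b x : α} :
    x ∈ intCC E a b ↔ x = a ∨ x = b ∨ (r a x ∧ r x b) := by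
  simp [intCC, Set.Finite.mem_toFinset]

lemma conv_intCC (E : Env r) {a b : α} (hab : r a b) : Conv r (intCC E a b) := by
  intro x hx y hy z h1 h2
  rw [mem_intCC] at hx hy ⊢
  have hax : r a z := by
    rcases hx with rfl | rfl | ⟨h3, h4⟩
    · exact h1
    · exact E.tr hab h1
    · exact E.tr h3 h1
  have hzb : r z b := by
    rcases hy with rfl | rfl | ⟨h3, h4⟩
    · exact E.tr h2 hab
    · exact h2
    · exact E.tr h2 h4
  exact Or.inr (Or.inr ⟨hax, hzb⟩)

/-- half-open interval (a, b] -/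
noncomputable def intOC (E : Env r) (a b : α) : Finset α :=
  insert b (E.lf a b).toFinset

lemma mem_intOC {E : Env r} {a b x : α} :
    x ∈ intOC E a b ↔ x = b ∨ (r a x ∧ r x b) := by
  simp [intOC, Set.Finite.mem_toFinset]

lemma conv_intOC (E : Env r) {a b : α} (hab : r a b) : Conv r (intOC E a b) := by
  intro x hx y hy z h1 h2
  rw [mem_intOC] at hx hy ⊢
  have hax : r a z := by
    rcases hx with rfl | ⟨h3, h4⟩
    · exact E.tr hab h1
    · exact E.tr h3 h1
  have hzb : r z b := by
    rcases hy with rfl | ⟨h3, h4⟩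
    · exact h2
    · exact E.tr h2 h4
  exact Or.inr ⟨hax, hzb⟩

lemma lb_intOC {E : Env r} {a b x : α} (hab : r a b) (hx : x ∈ intOC E a b) : r a x := by
  rw [mem_intOC] at hx
  rcases hx with rfl | ⟨h3, _⟩
  · exact hab
  · exact h3

/-- potential violations of convexity of `insert v U` -/
noncomputable def viol (E : Env r) (U : Finset α) (v : α) : Finset α :=
  (U.biUnion (fun u => (E.lf u v).toFinset ∪ (E.lf v u).toFinset)).filter (fun z => z ∉ U)

lemma mem_viol {E : Env r} {U : Finset α} {v z : α} :
    z ∈ viol E U v ↔ (∃ u ∈ U, (r u z ∧ r z v) ∨ (r v z ∧ r z u)) ∧ z ∉ U := by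
  simp [viol, Set.Finite.mem_toFinset]

/-- if `insert v U` is not convex, there is a violation strictly closer to `U`. -/
lemma ext_step (E : Env r) {U : Finset α} (hU : Conv r U) {v : α} (hv : v ∉ U)
    (hnc : ¬ Conv r (insert v U)) :
    ∃ z ∈ viol E U v, viol E U z ⊆ (viol E U v).erase z ∧
      (∀ u₀ ∈ U, r v u₀ → ∃ u ∈ U, r z u) := by
  simp only [Conv, not_forall] at hnc
  obtain ⟨x, hx, y, hy, z, hxz, hzy, hz⟩ := hnc
  rw [Finset.mem_insert] at hx hy
  have hzU : z ∉ U := fun h => hz (Finset.mem_insert_of_mem h)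
  have hzv : z ≠ v := fun h => hz (h ▸ Finset.mem_insert_self _ _)
  rcases hx with rfl | hxU
  · rcases hy with rfl | hyU
    · exact absurd (E.tr hxz hzy) (E.ir _)
    · -- up-move: v=x ≺ z ≺ y ∈ U
      refine ⟨z, mem_viol.2 ⟨⟨y, hyU, Or.inr ⟨hxz, hzy⟩⟩, hzU⟩, ?_, ?_⟩
      · intro z' hz'
        rw [mem_viol] at hz'
        obtain ⟨⟨u, hu, hpat⟩, hz'U⟩ := hz'
        rcases hpat with ⟨h1, h2⟩ | ⟨h1, h2⟩
        · -- u ≺ z' ≺ z ≺ y : z' ∈ U by convexity, contra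
          exact absurd (hU u hu y hyU z' h1 (E.tr h2 hzy)) hz'U
        · -- z ≺ z' ≺ u, and v ≺ z: z' ∈ viol v
          refine Finset.mem_erase.2 ⟨?_, mem_viol.2 ⟨⟨u, hu, Or.inr ⟨E.tr hxz h1, h2⟩⟩, hz'U⟩⟩
          rintro rfl
          exact E.ir z' h1
      · intro u₀ hu₀ hvu
        exact ⟨y, hyU, hzy⟩
  · rcases hy with rfl | hyU
    · -- down-move: x ∈ U, x ≺ z ≺ v=y
      refine ⟨z, mem_viol.2 ⟨⟨x, hxU, Or.inl ⟨hxz, hzy⟩⟩, hzU⟩, ?_, ?_⟩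
      · intro z' hz'
        rw [mem_viol] at hz'
        obtain ⟨⟨u, hu, hpat⟩, hz'U⟩ := hz'
        rcases hpat with ⟨h1, h2⟩ | ⟨h1, h2⟩
        · -- u ≺ z' ≺ z ≺ v : z' ∈ viol v
          refine Finset.mem_erase.2 ⟨?_, mem_viol.2 ⟨⟨u, hu, Or.inl ⟨h1, E.tr h2 hzy⟩⟩, hz'U⟩⟩
          rintro rfl
          exact E.ir z' h2
        · -- x ≺ z ≺ z' ≺ u : z' ∈ U contra
          exact absurd (hU x hxU u hu z' (E.tr hxz h1) h2) hz'U
      · intro u₀ hu₀ hvu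
        -- z ≺ v ≺ u₀ : anchored
        exact ⟨u₀, hu₀, E.tr hzy hvu⟩
    · exact absurd (Finset.mem_insert_of_mem (hU x hxU y hyU z hxz hzy)) hz

/-- one-point convex extension -/
lemma ext_any (E : Env r) {U : Finset α} (hU : Conv r U) :
    ∀ N (v : α), v ∉ U → (viol E U v).card ≤ N →
      ∃ w, w ∉ U ∧ Conv r (insert w U) := by
  intro N
  induction N with
  | zero =>
    intro v hv hcard
    by_cases hc : Conv r (insert v U)
    · exact ⟨v, hv, hc⟩
    · obtain ⟨z, hzin, _, _⟩ := ext_step E hU hv hc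
      have := Finset.card_pos.2 ⟨z, hzin⟩
      omega
  | succ N ih =>
    intro v hv hcard
    by_cases hc : Conv r (insert v U)
    · exact ⟨v, hv, hc⟩
    · obtain ⟨z, hzin, hsub, _⟩ := ext_step E hU hv hc
      have hzU : z ∉ U := (mem_viol.1 hzin).2
      have hle : (viol E U z).card ≤ N := by
        have h1 := Finset.card_le_card hsub
        have h2 : ((viol E U v).erase z).card = (viol E U v).card - 1 :=
          Finset.card_erase_of_mem hzin
        omega
      exact ih z hzU hle

/-- one-point convex extension anchored below -/
lemma ext_down (E : Env r) {U : Finset α} (hU : Conv r U) :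
    ∀ N (v : α), v ∉ U → (∃ u ∈ U, r v u) → (viol E U v).card ≤ N →
      ∃ w, w ∉ U ∧ Conv r (insert w U) ∧ ∃ u ∈ U, r w u := by
  intro N
  induction N with
  | zero =>
    intro v hv hanc hcard
    by_cases hc : Conv r (insert v U)
    · exact ⟨v, hv, hc, hanc⟩
    · obtain ⟨z, hzin, _, _⟩ := ext_step E hU hv hc
      have := Finset.card_pos.2 ⟨z, hzin⟩
      omega
  | succ N ih =>
    intro v hv hanc hcard
    by_cases hc : Conv r (insert v U)
    · exact ⟨v, hv, hc, hanc⟩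
    · obtain ⟨z, hzin, hsub, hanc'⟩ := ext_step E hU hv hc
      obtain ⟨u₀, hu₀, hvu₀⟩ := hanc
      have hzU : z ∉ U := (mem_viol.1 hzin).2
      have hle : (viol E U z).card ≤ N := by
        have h1 := Finset.card_le_card hsub
        have h2 : ((viol E U v).erase z).card = (viol E U v).card - 1 :=
          Finset.card_erase_of_mem hzin
        omega
      exact ih z hzU (hanc' u₀ hu₀ hvu₀) hle


end Machinery

section Pside
variable {n : ℕ} (q : Fin n → Fin n → Prop)

def HasTop (F : Finset (Fin n)) : Prop := ∃ m ∈ F, ∀ x ∈ F, x ≠ m → q x m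

open Classical in
noncomputable def strip (F : Finset (Fin n)) : Finset (Fin n) :=
  if h : HasTop q F then F.erase h.choose else F

noncomputable def PP (j : ℕ) : Finset (Fin n) := (strip q)^[j] Finset.univ

variable {q}
variable (hqt : Transitive q) (hqi : ∀ x, ¬ q x x)

lemma PP_zero : PP q 0 = Finset.univ := rfl

lemma PP_succ (j : ℕ) : PP q (j + 1) = strip q (PP q j) := by
  simp [PP, Function.iterate_succ_apply']

lemma strip_spec {F : Finset (Fin n)} (h : HasTop q F) :
    ∃ m ∈ F, (∀ x ∈ F, x ≠ m → q x m) ∧ strip q F = F.erase m := by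
  refine ⟨h.choose, h.choose_spec.1, h.choose_spec.2, ?_⟩
  simp [strip, h]

lemma strip_subset (F : Finset (Fin n)) : strip q F ⊆ F := by
  by_cases h : HasTop q F
  · obtain ⟨m, _, _, heq⟩ := strip_spec h
    rw [heq]; exact Finset.erase_subset _ _
  · simp [strip, h]

lemma PP_succ_subset (j : ℕ) : PP q (j+1) ⊆ PP q j := by
  rw [PP_succ]; exact strip_subset _

lemma PP_mono {i j : ℕ} (h : i ≤ j) : PP q j ⊆ PP q i := by
  induction j with
  | zero => simp_all
  | succ j ih =>
    rcases Nat.eq_or_lt_of_le h with rfl | hlt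
    · exact subset_rfl
    · exact (PP_succ_subset j).trans (ih (by omega))

/-- incomparable pairs survive all strips -/
lemma survive {u v : Fin n} (huv : u ≠ v) (h1 : ¬ q u v) (h2 : ¬ q v u) (j : ℕ) :
    u ∈ PP q j ∧ v ∈ PP q j := by
  induction j with
  | zero => simp [PP_zero]
  | succ j ih =>
    rw [PP_succ]
    by_cases h : HasTop q (PP q j)
    · obtain ⟨m, hm, hmax, heq⟩ := strip_spec h
      rw [heq]
      constructor
      · refine Finset.mem_erase.2 ⟨?_, ih.1⟩
        rintro rfl
        exact h2 (hmax v ih.2 (Ne.symm huv))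
      · refine Finset.mem_erase.2 ⟨?_, ih.2⟩
        rintro rfl
        exact h1 (hmax u ih.1 huv)
    · simp [strip, h, ih]

include hqt hqi in
lemma exists_notop {u v : Fin n} (huv : u ≠ v) (h1 : ¬ q u v) (h2 : ¬ q v u) :
    ∃ j, ¬ HasTop q (PP q j) := by
  by_contra hall
  push_neg at hall
  have hcard : ∀ j, j ≤ n → (PP q j).card + j = n := by
    intro j
    induction j with
    | zero => intro _; simp [PP_zero]
    | succ j ih =>
      intro hj
      obtain ⟨m, hm, _, heq⟩ := strip_spec (hall j)
      rw [PP_succ, heq, Finset.card_erase_of_mem hm]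
      have := ih (by omega)
      have hpos : 0 < (PP q j).card := Finset.card_pos.2 ⟨m, hm⟩
      omega
  have hu := (survive huv h1 h2 n).1
  have := hcard n le_rfl
  have : (PP q n).card = 0 := by omega
  rw [Finset.card_eq_zero] at this
  rw [this] at hu
  simp at hu

variable (hfind : ∃ j, ¬ HasTop q (PP q j))

noncomputable def kk : ℕ := @Nat.find _ (Classical.decPred _) hfind

lemma kk_spec : ¬ HasTop q (PP q (kk hfind)) := @Nat.find_spec _ (Classical.decPred _) hfind

lemma kk_min {j : ℕ} (hj : j < kk hfind) : HasTop q (PP q j) :=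
  not_not.1 (@Nat.find_min _ (Classical.decPred _) hfind j hj)

lemma kk_card : ∀ j, j ≤ kk hfind → (PP q j).card + j = n := by
  intro j
  induction j with
  | zero => intro _; simp [PP_zero]
  | succ j ih =>
    intro hj
    obtain ⟨m, hm, _, heq⟩ := strip_spec (kk_min hfind (show j < kk hfind by omega))
    rw [PP_succ, heq, Finset.card_erase_of_mem hm]
    have := ih (by omega)
    have hpos : 0 < (PP q j).card := Finset.card_pos.2 ⟨m, hm⟩
    omega

lemma kk_le_n : kk hfind ≤ n := by
  by_contra h
  have := kk_card hfind n (by omega)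
  have h2 := kk_min hfind (show n < kk hfind by omega)
  obtain ⟨m, hm, _⟩ := h2
  have : (PP q n).card = 0 := by omega
  rw [Finset.card_eq_zero] at this
  rw [this] at hm
  simp at hm

/-- survivors dominate removed elements -/
lemma notin_dom : ∀ j (x : Fin n), x ∉ PP q j → ∀ y ∈ PP q j, q y x := by
  intro j
  induction j with
  | zero => intro x hx; simp [PP_zero] at hx
  | succ j ih =>
    intro x hx y hy
    by_cases hxj : x ∈ PP q j
    · by_cases h : HasTop q (PP q j)
      · obtain ⟨m, hm, hmax, heq⟩ := strip_spec h
        rw [PP_succ, heq] at hx hy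
        have hxm : x = m := by
          by_contra hne
          exact hx (Finset.mem_erase.2 ⟨hne, hxj⟩)
        subst hxm
        exact hmax y (Finset.mem_of_mem_erase hy) (Finset.ne_of_mem_erase hy)
      · rw [PP_succ] at hx
        simp [strip, h] at hx
        exact absurd hxj hx
    · exact ih x hxj y (PP_succ_subset j hy)

include hqt hqi in
/-- removed elements are comparable to everything -/
lemma notin_comp : ∀ j (x : Fin n), x ∉ PP q j → ∀ y, y ≠ x → y ∈ PP q j ∨ q x y ∨ q y x := by
  intro j
  induction j with
  | zero => intro x hx; simp [PP_zero] at hx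
  | succ j ih =>
    intro x hx y hy
    by_cases hxj : x ∈ PP q j
    · -- x is removed at stage j
      by_cases hyj : y ∈ PP q j
      · by_cases hyj1 : y ∈ PP q (j+1)
        · exact Or.inl hyj1
        · -- both x and y removed at stage j: but only one element is removed
          by_cases h : HasTop q (PP q j)
          · obtain ⟨m, hm, hmax, heq⟩ := strip_spec h
            rw [PP_succ, heq] at hx hyj1
            have hxm : x = m := by
              by_contra hne; exact hx (Finset.mem_erase.2 ⟨hne, hxj⟩)
            have hym : y = m := by
              by_contra hne; exact hyj1 (Finset.mem_erase.2 ⟨hne, hyj⟩)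
            exact absurd (hym.trans hxm.symm) hy
          · rw [PP_succ] at hyj1; simp [strip, h] at hyj1
            exact absurd hyj hyj1
      · -- y removed earlier: x ∈ PP j dominates y? no: y ∉ PP j: everything in PP j dominates... q x y
        exact Or.inr (Or.inl (notin_dom j y hyj x hxj))
    · -- x removed earlier
      rcases ih x hxj y hy with hyP | hc
      · by_cases hyj1 : y ∈ PP q (j+1)
        · exact Or.inl hyj1
        · -- y removed at stage j, x removed earlier: q y x
          exact Or.inr (Or.inr (notin_dom j x hxj y hyP))
      · exact Or.inr hc

end Pside

section Pwidth
variable {n : ℕ} {q : Fin n → Fin n → Prop}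
variable (hqt : Transitive q) (hqi : ∀ x, ¬ q x x)
variable {u v : Fin n} (huv : u ≠ v) (h1 : ¬ q u v) (h2 : ¬ q v u)
variable (hf1 : ∃ j, ¬ HasTop q (PP q j))
variable (hf2 : ∃ j, ¬ HasTop (flip q) (PP (flip q) j))

include hqt hqi huv h1 h2 in
lemma pside_width (A : Finset (Fin n))
    (hA : ∀ x ∈ A, ∀ y ∈ A, x ≠ y → ¬ q x y) (h2c : 2 ≤ A.card) :
    A.card + kk hf1 + kk hf2 ≤ n := by
  classical
  have hsub1 : A ⊆ PP q (kk hf1) := by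
    intro a ha
    by_contra hnot
    obtain ⟨b, hb, hba⟩ := Finset.exists_mem_ne (show 1 < A.card by omega) a
    have hbmem := hb
    rcases notin_comp hqt hqi _ a hnot b hba with hbP | hq | hq
    · exact hA b hb a ha hba (notin_dom _ a hnot b hbP)
    · exact hA a ha b hb (Ne.symm hba) hq
    · exact hA b hb a ha hba hq
  have hsub2 : A ⊆ PP (flip q) (kk hf2) := by
    intro a ha
    by_contra hnot
    obtain ⟨b, hb, hba⟩ := Finset.exists_mem_ne (show 1 < A.card by omega) a
    rcases notin_comp (show Transitive (flip q) from fun _ _ _ ha hb => hqt hb ha) (show ∀ x, ¬ (flip q) x x from hqi) _ a hnot b hba with hbP | hq | hq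
    · exact hA a ha b hb (Ne.symm hba) (notin_dom _ a hnot b hbP)
    · exact hA b hb a ha hba hq
    · exact hA a ha b hb (Ne.symm hba) hq
  set Top := Finset.univ \ PP q (kk hf1) with hTop
  set Bot := Finset.univ \ PP (flip q) (kk hf2) with hBot
  have hcardTop : Top.card = kk hf1 := by
    have h := kk_card hf1 (kk hf1) le_rfl
    rw [hTop, Finset.card_sdiff_of_subset (Finset.subset_univ _)]
    simp only [Finset.card_univ, Fintype.card_fin]
    omega
  have hcardBot : Bot.card = kk hf2 := by
    have h := kk_card hf2 (kk hf2) le_rfl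
    rw [hBot, Finset.card_sdiff_of_subset (Finset.subset_univ _)]
    simp only [Finset.card_univ, Fintype.card_fin]
    omega
  have hd1 : Disjoint A Top := by
    rw [Finset.disjoint_left]
    intro a ha hat
    rw [hTop, Finset.mem_sdiff] at hat
    exact hat.2 (hsub1 ha)
  have hd2 : Disjoint A Bot := by
    rw [Finset.disjoint_left]
    intro a ha hat
    rw [hBot, Finset.mem_sdiff] at hat
    exact hat.2 (hsub2 ha)
  have hd3 : Disjoint Top Bot := by
    rw [Finset.disjoint_left]
    intro x hx1 hx2
    rw [hTop, Finset.mem_sdiff] at hx1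
    rw [hBot, Finset.mem_sdiff] at hx2
    have hu1 : u ∈ PP q (kk hf1) := (survive huv h1 h2 _).1
    have hu2 : u ∈ PP (flip q) (kk hf2) := (survive huv h2 h1 _).1
    have hq1 : q u x := notin_dom _ x hx1.2 u hu1
    have hq2 : q x u := notin_dom _ x hx2.2 u hu2
    exact hqi u (hqt hq1 hq2)
  have hunion : (A ∪ Top ∪ Bot).card = A.card + Top.card + Bot.card := by
    rw [Finset.card_union_of_disjoint (by
      rw [Finset.disjoint_union_left]; exact ⟨hd2, hd3⟩),
      Finset.card_union_of_disjoint hd1]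
  have hle : (A ∪ Top ∪ Bot).card ≤ n := by
    have := Finset.card_le_card (Finset.subset_univ (A ∪ Top ∪ Bot))
    simpa using this
  omega

end Pwidth


section Core
variable {α : Type} [DecidableEq α] {r : α → α → Prop} {n : ℕ} {q : Fin n → Fin n → Prop}

/-- transported maximum -/
lemma t_max (E : Env r)
    (HC : ∀ S : Finset α, Conv r S → S.card = n →
      ∃ e : Fin n ≃ {x // x ∈ S}, ∀ a b, q a b ↔ r (e a).1 (e b).1)
    (Hmax : HasTop q Finset.univ) {T : Finset α} (hT : Conv r T) (hTc : T.card = n) :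
    ∃ M ∈ T, ∀ x ∈ T, x ≠ M → r x M := by
  obtain ⟨e, he⟩ := HC T hT hTc
  obtain ⟨m, _, hmax⟩ := Hmax
  refine ⟨(e m).1, (e m).2, ?_⟩
  intro x hx hxne
  have hec : ((e (e.symm ⟨x, hx⟩) : {x // x ∈ T}) : α) = x := by simp
  have hcm : e.symm ⟨x, hx⟩ ≠ m := by
    intro hcontra
    rw [hcontra] at hec
    exact hxne hec.symm
  have h2 := (he (e.symm ⟨x, hx⟩) m).1 (hmax _ (Finset.mem_univ _) hcm)
  rw [hec] at h2
  exact h2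

open Classical in
noncomputable def rkf (E : Env r) (b x : α) : ℕ :=
  if r b x then (E.lf b x).toFinset.card + 1 else 0

lemma rkf_lt (E : Env r) {b w u M : α} (hwu : r w u) (huM : r u M) (hbM : r b M) :
    rkf E b w < rkf E b M := by
  by_cases hbw : r b w
  · have hwM : r w M := E.tr hwu huM
    have hsub : (E.lf b w).toFinset ⊂ (E.lf b M).toFinset := by
      constructor
      · intro z hz
        rw [Set.Finite.mem_toFinset] at hz ⊢
        exact ⟨hz.1, E.tr hz.2 hwM⟩
      · intro hcon
        have hwmem : w ∈ (E.lf b M).toFinset := by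
          rw [Set.Finite.mem_toFinset]; exact ⟨hbw, hwM⟩
        have hw2 := hcon hwmem
        rw [Set.Finite.mem_toFinset] at hw2
        exact E.ir w hw2.2
    have := Finset.card_lt_card hsub
    rw [rkf, rkf]
    simp only [hbw, hbM, if_true]
    omega
  · rw [rkf, rkf]
    simp only [hbw, hbM, if_true, if_false]
    omega

lemma lemD (E : Env r) (hqt : Transitive q) (hqi : ∀ x, ¬ q x x)
    (HC : ∀ S : Finset α, Conv r S → S.card = n →
      ∃ e : Fin n ≃ {x // x ∈ S}, ∀ a b, q a b ↔ r (e a).1 (e b).1)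
    (hfind : ∃ j, ¬ HasTop q (PP q j)) (Hmax : HasTop q Finset.univ)
    (hkn : kk hfind + 1 ≤ n)
    (S : Finset α) (hS : Conv r S) (hSc : S.card = n)
    (y : Fin (kk hfind) → α)
    (hychain : ∀ i j : Fin (kk hfind), i < j → r (y i) (y j))
    (hybelow : ∀ i, ∀ s ∈ S, r (y i) s) : False := by
  classical
  have hk1 : 1 ≤ kk hfind := by
    rcases Nat.eq_zero_or_pos (kk hfind) with h0 | h
    · have hsp := kk_spec hfind
      rw [h0] at hsp
      exact absurd Hmax hsp
    · exact h
  obtain ⟨eS, heS⟩ := HC S hS hSc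
  have hinj : Function.Injective (fun a : Fin n => ((eS a : {x // x ∈ S}) : α)) :=
    fun a b hab => eS.injective (Subtype.ext hab)
  set SF : ℕ → Finset α := fun j => (PP q j).image (fun a => ((eS a : {x // x ∈ S}) : α))
    with hSF
  have hSgsubS : ∀ j, SF j ⊆ S := by
    intro j x hx
    obtain ⟨a, _, rfl⟩ := Finset.mem_image.1 hx
    exact (eS a).2
  have hSgcard : ∀ j, j ≤ (kk hfind) → (SF j).card + j = n := by
    intro j hj
    rw [hSF]
    simp only
    rw [Finset.card_image_of_injective _ hinj]
    exact kk_card hfind j hj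
  set β := y ⟨(kk hfind) - 1, by omega⟩ with hβ
  have hβS : ∀ s ∈ S, r β s := fun s hs => hybelow _ s hs
  suffices hmain : ∀ N j (T : Finset α), j ≤ (kk hfind) → Conv r T → T.card = n → SF j ⊆ T →
      T.sum (rkf E β) ≤ N → False by
    exact hmain (S.sum (rkf E β)) 0 S (by omega) hS hSc (hSgsubS 0) le_rfl
  intro N
  induction N using Nat.strong_induction_on with
  | _ N ih =>
    intro j T hjk hT hTc hSgT hψ
    obtain ⟨M, hMT, hMmax⟩ := t_max E HC Hmax hT hTc
    have step : ∀ j', j' ≤ (kk hfind) → SF j' ⊆ T.erase M → M ∉ SF j' → False := by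
      intro j' hj'k hSg'sub hMSg'
      have hSg'card : (SF j').card + j' = n := hSgcard j' hj'k
      have hSg'ne : (SF j').Nonempty := by
        rw [← Finset.card_pos]
        omega
      obtain ⟨s₀, hs₀⟩ := hSg'ne
      have hs₀U : s₀ ∈ T.erase M := hSg'sub hs₀
      have hs₀S : s₀ ∈ S := hSgsubS j' hs₀
      have hMnomax : ∀ y' ∈ T, ¬ r M y' := by
        intro y' hy' hMy
        by_cases hyM : y' = M
        · rw [hyM] at hMy; exact E.ir M hMy
        · exact E.nb hMy (hMmax y' hy' hyM)
      have hU : Conv r (T.erase M) := conv_erase hT hMT hMnomax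
      have hspare : ∃ i : Fin (kk hfind), y i ∉ T.erase M := by
        by_contra hall
        push_neg at hall
        have hynotS : ∀ i : Fin (kk hfind), y i ∉ S := by
          intro i hyS
          exact E.ir (y i) (hybelow i (y i) hyS)
        have hyim : (Finset.univ.image y) ⊆ (T \ SF j').erase M := by
          intro x hx
          obtain ⟨i, _, rfl⟩ := Finset.mem_image.1 hx
          have h1 : y i ∈ T.erase M := hall i
          refine Finset.mem_erase.2 ⟨(Finset.mem_erase.1 h1).1,
            Finset.mem_sdiff.2 ⟨(Finset.mem_erase.1 h1).2, ?_⟩⟩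
          intro hySg
          exact hynotS i (hSgsubS j' hySg)
        have hyinj : Function.Injective y := by
          intro i i' hii
          by_contra hne
          rcases lt_or_gt_of_ne hne with hlt | hlt
          · exact E.ir _ (hii ▸ hychain _ _ hlt)
          · exact E.ir _ (hii.symm ▸ hychain _ _ hlt)
        have hcard1 : (Finset.univ.image y).card = (kk hfind) := by
          rw [Finset.card_image_of_injective _ hyinj, Finset.card_univ, Fintype.card_fin]
        have hSg'T : SF j' ⊆ T := fun x hx => Finset.mem_of_mem_erase (hSg'sub hx)
        have hMTd : M ∈ T \ SF j' := Finset.mem_sdiff.2 ⟨hMT, hMSg'⟩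
        have hcard2 : (T \ SF j').card = j' := by
          have := Finset.card_sdiff_of_subset hSg'T
          omega
        have hcard3 : ((T \ SF j').erase M).card = j' - 1 := by
          rw [Finset.card_erase_of_mem hMTd]
          omega
        have hfin := Finset.card_le_card hyim
        have hj'pos : 1 ≤ j' := by
          by_contra hc
          push_neg at hc
          interval_cases j'
          · rw [Finset.card_eq_zero] at hcard2
            rw [hcard2] at hMTd
            simp at hMTd
        omega
      obtain ⟨i, hyiU⟩ := hspare
      have hanc : ∃ u ∈ T.erase M, r (y i) u := ⟨s₀, hs₀U, hybelow i s₀ hs₀S⟩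
      obtain ⟨w, hwU, hwConv, u, huU, hwu⟩ :=
        ext_down E hU (viol E (T.erase M) (y i)).card (y i) hyiU hanc le_rfl
      have hwneM : w ≠ M := by
        rintro rfl
        exact E.nb hwu (hMmax u (Finset.mem_of_mem_erase huU) (Finset.ne_of_mem_erase huU))
      have hT'c : (insert w (T.erase M)).card = n := by
        rw [Finset.card_insert_of_notMem hwU, Finset.card_erase_of_mem hMT]
        have : 1 ≤ T.card := Finset.card_pos.2 ⟨M, hMT⟩
        omega
      have hSg'T' : SF j' ⊆ insert w (T.erase M) :=
        fun x hx => Finset.mem_insert_of_mem (hSg'sub hx)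
      have hβM : r β M := by
        have hh1 : r β s₀ := hβS s₀ hs₀S
        have hh2 : r s₀ M := hMmax s₀ (Finset.mem_of_mem_erase hs₀U) (Finset.ne_of_mem_erase hs₀U)
        exact E.tr hh1 hh2
      have hδ : rkf E β w < rkf E β M :=
        rkf_lt E hwu (hMmax u (Finset.mem_of_mem_erase huU) (Finset.ne_of_mem_erase huU)) hβM
      have hψ' : (insert w (T.erase M)).sum (rkf E β) < T.sum (rkf E β) := by
        have hsum1 : (insert w (T.erase M)).sum (rkf E β)
            = rkf E β w + (T.erase M).sum (rkf E β) := Finset.sum_insert hwU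
        have hsum2 : (T.erase M).sum (rkf E β) + rkf E β M = T.sum (rkf E β) :=
          Finset.sum_erase_add T (rkf E β) hMT
        omega
      exact ih ((insert w (T.erase M)).sum (rkf E β)) (by omega) j' (insert w (T.erase M)) hj'k hwConv
        hT'c hSg'T' le_rfl
    by_cases hMSg : M ∈ SF j
    · rcases Nat.eq_or_lt_of_le hjk with heq | hlt
      · -- j = (kk hfind): SF (kk hfind) has no top, contradiction
        have hnt := kk_spec hfind
        rw [← heq] at hnt
        obtain ⟨a, haP, haM⟩ := Finset.mem_image.1 hMSg
        rw [HasTop] at hnt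
        push_neg at hnt
        obtain ⟨x, hxP, hxne, hxnq⟩ := hnt a haP
        have hxT : ((eS x : _) : α) ∈ T := hSgT (Finset.mem_image.2 ⟨x, hxP, rfl⟩)
        have hne : ((eS x : _) : α) ≠ M := by
          rw [← haM]
          intro hcon
          exact hxne (hinj hcon)
        have hr := hMmax _ hxT hne
        rw [← haM] at hr
        exact hxnq ((heS x a).2 hr)
      · -- j < (kk hfind): strip
        obtain ⟨m, hmP, hmax, hPsucc⟩ := strip_spec (kk_min hfind hlt)
        have hMeq : M = ((eS m : _) : α) := by
          by_contra hne
          obtain ⟨a, haP, haM⟩ := Finset.mem_image.1 hMSg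
          have ham : a ≠ m := by
            intro hcon
            rw [hcon] at haM
            exact hne haM.symm
          have hq1 : q a m := hmax a haP ham
          have hr2 : r ((eS a : _) : α) ((eS m : _) : α) := (heS a m).1 hq1
          rw [haM] at hr2
          have hmT : ((eS m : _) : α) ∈ T := hSgT (Finset.mem_image.2 ⟨m, hmP, rfl⟩)
          have hr3 : r ((eS m : _) : α) M := hMmax _ hmT (fun hcon => hne hcon.symm)
          exact E.nb hr2 hr3
        apply step (j+1) (by omega)
        · intro x hx
          obtain ⟨a, haP, rfl⟩ := Finset.mem_image.1 hx
          rw [PP_succ, hPsucc] at haP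
          have haP' := Finset.mem_of_mem_erase haP
          refine Finset.mem_erase.2 ⟨?_, hSgT (Finset.mem_image.2 ⟨a, haP', rfl⟩)⟩
          rw [hMeq]
          intro hcon
          exact (Finset.ne_of_mem_erase haP) (hinj hcon)
        · intro hcon
          obtain ⟨a, haP, haM⟩ := Finset.mem_image.1 hcon
          rw [PP_succ, hPsucc] at haP
          exact (Finset.ne_of_mem_erase haP) (hinj (haM.trans hMeq))
    · apply step j hjk
      · intro x hx
        refine Finset.mem_erase.2 ⟨?_, hSgT hx⟩
        rintro rfl
        exact hMSg hx
      · exact hMSg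

lemma noChainB (E : Env r) (hqt : Transitive q) (hqi : ∀ x, ¬ q x x)
    (HC : ∀ S : Finset α, Conv r S → S.card = n →
      ∃ e : Fin n ≃ {x // x ∈ S}, ∀ a b, q a b ↔ r (e a).1 (e b).1)
    (hfind : ∃ j, ¬ HasTop q (PP q j)) (Hmax : HasTop q Finset.univ)
    (hkn : kk hfind + 1 ≤ n) (hn1 : 1 ≤ n)
    (f : Fin (n + kk hfind) → α) (hf : ∀ i j, i < j → r (f i) (f j)) : False := by
  classical
  have hk1 : 1 ≤ kk hfind := by
    rcases Nat.eq_zero_or_pos (kk hfind) with h0 | hpos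
    · have hsp := kk_spec hfind
      rw [h0] at hsp
      exact absurd Hmax hsp
    · exact hpos
  have hfinj : Function.Injective f := by
    intro i i' hii
    by_contra hne
    rcases lt_or_gt_of_ne hne with hlt | hlt
    · exact E.ir _ (hii ▸ hf _ _ hlt)
    · exact E.ir _ (hii.symm ▸ hf _ _ hlt)
  set a := f ⟨kk hfind - 1, by omega⟩ with ha
  set b := f ⟨n + kk hfind - 1, by omega⟩ with hb
  have hab : r a b := by
    apply hf
    rw [Fin.lt_def]
    simp only
    omega
  have hmem : ∀ i : Fin n, f ⟨kk hfind + i.1, by omega⟩ ∈ intOC E a b := by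
    intro i
    rw [mem_intOC]
    by_cases hi : (i : ℕ) = n - 1
    · left
      rw [hb]
      congr 1
      ext
      simp only
      omega
    · right
      constructor
      · apply hf
        rw [Fin.lt_def]
        simp only
        omega
      · rw [hb]
        apply hf
        rw [Fin.lt_def]
        simp only
        have := i.isLt
        omega
  have hcard : n ≤ (intOC E a b).card := by
    have hsub : Finset.univ.image (fun i : Fin n => f ⟨kk hfind + i.1, by omega⟩)
        ⊆ intOC E a b := by
      intro x hx
      obtain ⟨i, _, rfl⟩ := Finset.mem_image.1 hx
      exact hmem i
    have hinj2 : Function.Injective (fun i : Fin n => f ⟨kk hfind + i.1, by omega⟩) := by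
      intro i i' hii
      have := hfinj hii
      rw [Fin.mk.injEq] at this
      exact Fin.ext (by omega)
    have := Finset.card_le_card hsub
    rw [Finset.card_image_of_injective _ hinj2, Finset.card_univ, Fintype.card_fin] at this
    exact this
  obtain ⟨S, hSsub, hSconv, hScard⟩ :=
    shrink_plain E (intOC E a b) (conv_intOC E hab) n hcard
  apply lemD E hqt hqi HC hfind Hmax hkn S hSconv hScard
    (fun i : Fin (kk hfind) => f ⟨i.1, by omega⟩)
  · intro i j hij
    apply hf
    rw [Fin.lt_def]
    simp only
    exact hij
  · intro i s hs
    have has : r a s := lb_intOC hab (hSsub hs)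
    rcases Nat.eq_or_lt_of_le (show (i : ℕ) ≤ kk hfind - 1 by have := i.isLt; omega)
      with heq | hlt
    · have : (⟨i.1, by omega⟩ : Fin (n + kk hfind)) = ⟨kk hfind - 1, by omega⟩ := by
        ext; simp only; omega
      rw [this]
      exact has
    · refine E.tr ?_ has
      rw [ha]
      apply hf
      rw [Fin.lt_def]
      simp only
      omega

lemma noChainA (E : Env r)
    (HC : ∀ S : Finset α, Conv r S → S.card = n →
      ∃ e : Fin n ≃ {x // x ∈ S}, ∀ a b, q a b ↔ r (e a).1 (e b).1)
    (hnt : ¬ HasTop q Finset.univ) (hn2 : 2 ≤ n)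
    (f : Fin n → α) (hf : ∀ i j, i < j → r (f i) (f j)) : False := by
  classical
  have hfinj : Function.Injective f := by
    intro i i' hii
    by_contra hne
    rcases lt_or_gt_of_ne hne with hlt | hlt
    · exact E.ir _ (hii ▸ hf _ _ hlt)
    · exact E.ir _ (hii.symm ▸ hf _ _ hlt)
  set a := f ⟨0, by omega⟩ with ha
  set b := f ⟨n - 1, by omega⟩ with hb
  have hab : r a b := by
    apply hf
    rw [Fin.lt_def]
    simp only
    omega
  have hmem : ∀ i : Fin n, f i ∈ intCC E a b := by
    intro i
    rw [mem_intCC]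
    by_cases hi0 : (i : ℕ) = 0
    · left; rw [ha]; congr 1; ext; simp only; omega
    · by_cases hi1 : (i : ℕ) = n - 1
      · right; left; rw [hb]; congr 1; ext; simp only; omega
      · right; right
        constructor
        · rw [ha]; apply hf; rw [Fin.lt_def]; simp only; omega
        · rw [hb]; apply hf; rw [Fin.lt_def]; simp only; have := i.isLt; omega
  have hcard : n ≤ (intCC E a b).card := by
    have hsub : Finset.univ.image f ⊆ intCC E a b := by
      intro x hx
      obtain ⟨i, _, rfl⟩ := Finset.mem_image.1 hx
      exact hmem i
    have := Finset.card_le_card hsub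
    rw [Finset.card_image_of_injective _ hfinj, Finset.card_univ, Fintype.card_fin] at this
    exact this
  have hbmax : ∀ x ∈ intCC E a b, x ≠ b → r x b := by
    intro x hx hne
    rw [mem_intCC] at hx
    rcases hx with rfl | rfl | ⟨_, h2⟩
    · exact hab
    · exact absurd rfl hne
    · exact h2
  have hbK : b ∈ intCC E a b := by rw [mem_intCC]; right; left; rfl
  obtain ⟨T, hTsub, hTconv, hTcard, hbT⟩ :=
    shrink_keep E.flip (intCC E a b) (conv_flip.2 (conv_intCC E hab)) b hbK
      (fun y hy hne => hbmax y hy hne) n (by omega) hcard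
  have hTconv' : Conv r T := conv_flip.1 hTconv
  obtain ⟨e, he⟩ := HC T hTconv' hTcard
  apply hnt
  refine ⟨e.symm ⟨b, hbT⟩, Finset.mem_univ _, ?_⟩
  intro x _ hxne
  have hb' : ((e (e.symm ⟨b, hbT⟩) : {z // z ∈ T}) : α) = b := by simp
  refine (he x _).2 ?_
  rw [hb']
  apply hbmax _ (hTsub (e x).2)
  intro hcon
  apply hxne
  have : (e x : {z // z ∈ T}) = ⟨b, hbT⟩ := Subtype.ext hcon
  rw [← this]
  simp

lemma grow (E : Env r) (S₀ : Finset α) (hS₀card : S₀.card = n) :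
    ∀ d (A : Finset α), Conv r A → A.card + d = n →
      ∃ T, A ⊆ T ∧ Conv r T ∧ T.card = n := by
  intro d
  induction d with
  | zero =>
    intro A hA hcard
    exact ⟨A, subset_rfl, hA, by omega⟩
  | succ d ih =>
    intro A hA hcard
    have hex : ∃ x ∈ S₀, x ∉ A := by
      by_contra hall
      push_neg at hall
      have := Finset.card_le_card (fun x hx => hall x hx)
      omega
    obtain ⟨x, _, hxA⟩ := hex
    obtain ⟨w, hwA, hwconv⟩ := ext_any E hA (viol E A x).card x hxA le_rfl
    obtain ⟨T, hT1, hT2, hT3⟩ := ih (insert w A) hwconv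
      (by rw [Finset.card_insert_of_notMem hwA]; omega)
    exact ⟨T, (Finset.subset_insert _ _).trans hT1, hT2, hT3⟩

lemma mirsky (E : Env r) (W : ℕ)
    (hW : ∀ A : Finset α, (∀ x ∈ A, ∀ y ∈ A, x ≠ y → ¬ r x y) → A.card ≤ W) :
    ∀ H (F : Finset α),
      (∀ f : Fin (H+1) → α, (∀ i, f i ∈ F) → ¬ (∀ i j, i < j → r (f i) (f j))) →
      F.card ≤ H * W := by
  classical
  intro H
  induction H with
  | zero =>
    intro F hch
    by_contra hc
    push_neg at hc
    obtain ⟨x, hx⟩ := Finset.card_pos.1 (show 0 < F.card by omega)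
    refine hch (fun _ => x) (fun _ => hx) ?_
    intro i j hij
    exfalso
    have h1 := Fin.lt_def.1 hij
    have h2 := j.isLt
    omega
  | succ H ih =>
    intro F hch
    set Mx := F.filter (fun x => ∀ y ∈ F, ¬ r x y) with hMx
    have hMxW : Mx.card ≤ W := by
      apply hW
      intro x hx y hy hne hr
      rw [hMx, Finset.mem_filter] at hx hy
      exact hx.2 y hy.1 hr
    have hF' : (F \ Mx).card ≤ H * W := by
      apply ih
      intro f hfF hfch
      have htop := hfF ⟨H, by omega⟩
      rw [Finset.mem_sdiff] at htop
      have hnotMx := htop.2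
      rw [hMx, Finset.mem_filter] at hnotMx
      push_neg at hnotMx
      obtain ⟨z, hzF, hrz⟩ := hnotMx htop.1
      apply hch (fun i => if h : (i : ℕ) < H + 1 then f ⟨i, h⟩ else z)
      · intro i
        by_cases h : (i : ℕ) < H + 1
        · rw [dif_pos h]
          exact (Finset.mem_sdiff.1 (hfF ⟨i, h⟩)).1
        · rw [dif_neg h]
          exact hzF
      · intro i j hij
        have hij' := Fin.lt_def.1 hij
        by_cases hj : (j : ℕ) < H + 1
        · have hi : (i : ℕ) < H + 1 := by omega
          rw [dif_pos hi, dif_pos hj]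
          exact hfch ⟨i, hi⟩ ⟨j, hj⟩ (by rw [Fin.lt_def]; exact hij')
        · have hi : (i : ℕ) < H + 1 := by have := j.isLt; omega
          rw [dif_pos hi, dif_neg hj]
          by_cases hiH : (i : ℕ) = H
          · have heq : (⟨(i : ℕ), hi⟩ : Fin (H+1)) = ⟨H, by omega⟩ := by
              ext; simp only; omega
            rw [heq]
            exact hrz
          · exact E.tr (hfch ⟨i, hi⟩ ⟨H, by omega⟩ (by rw [Fin.lt_def]; simp only; omega)) hrz
    have hsplit : (F \ Mx).card + Mx.card = F.card :=
      Finset.card_sdiff_add_card_eq_card (Finset.filter_subset _ _)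
    have hmul : (H + 1) * W = H * W + W := by ring
    omega

end Core

lemma isoFin_equiv (n : ℕ) : Equivalence (@IsoFin n) := by
  constructor
  · intro p
    exact ⟨Equiv.refl _, fun a b => Iff.rfl⟩
  · rintro p q ⟨g, hg⟩
    refine ⟨g.symm, fun a b => ?_⟩
    have := hg (g.symm a) (g.symm b)
    simp only [Equiv.apply_symm_apply] at this
    exact this.symm
  · rintro p q s ⟨g, hg⟩ ⟨g', hg'⟩
    exact ⟨g.trans g', fun a b => (hg a b).trans (hg' (g a) (g b))⟩

/-- if the `n`-element poset `p` is neither a chain nor an antichain,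
then every causet whose set of `n`-convex-suborders is the singleton `{[p]}` has
cardinality strictly less than `n²` (in particular it is finite). -/
theorem stmt_12 (n : ℕ) (p : FinSPO n)
    (hchain : ¬ ∀ a b : Fin n, a ≠ b → p.1 a b ∨ p.1 b a)
    (hanti : ¬ ∀ a b : Fin n, ¬ p.1 a b)
    (C : Causet) (h : IsCert C ({toNOrder p} : Set (NOrder n))) :
    Finite C.carrier ∧ Nat.card C.carrier < n ^ 2 := by
  classical
  letI : DecidableEq C.carrier := Classical.decEq _
  have E : Env C.rel := ⟨C.trans, C.irrefl, C.locFin⟩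
  have hqt : Transitive p.1 := p.2.1
  have hqi : ∀ x, ¬ p.1 x x := p.2.2
  -- certificate interface
  have HC : ∀ S : Finset C.carrier, Conv C.rel S → S.card = n →
      ∃ e : Fin n ≃ {x // x ∈ S}, ∀ a b, p.1 a b ↔ C.rel (e a).1 (e b).1 := by
    intro S hSc hScard
    let f0 : Fin n ≃ {x // x ∈ S} := ((Finset.equivFin S).trans (finCongr hScard)).symm
    let pS : FinSPO n := ⟨fun a b => C.rel (f0 a).1 (f0 b).1,
      fun a b c h1 h2 => C.trans h1 h2, fun a hh => C.irrefl _ hh⟩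
    have hrange : Set.range (fun a => ((f0 a : {x // x ∈ S}) : C.carrier)) = ↑S := by
      apply Set.eq_of_subset_of_subset
      · rintro x ⟨a, rfl⟩
        exact (f0 a).2
      · intro x hx
        exact ⟨f0.symm ⟨x, hx⟩, by simp⟩
    have hRep : RepConvex C.rel pS := by
      refine ⟨fun a => (f0 a).1, ?_, ?_, fun a b => Iff.rfl⟩
      · intro a b hab
        exact f0.injective (Subtype.ext hab)
      · constructor
        · rw [hrange]
          exact S.finite_toSet
        · intro x hx y hy z h1 h2
          rw [hrange] at hx hy ⊢
          exact hSc x hx y hy z h1 h2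
    have hmem : toNOrder pS ∈ convexSubords C.rel n := ⟨pS, rfl, hRep⟩
    rw [h] at hmem
    have heq : toNOrder pS = toNOrder p := Set.mem_singleton_iff.1 hmem
    have hiso : IsoFin pS p :=
      ((isoFin_equiv n).eqvGen_iff).1 (Quot.eqvGen_exact heq)
    obtain ⟨g, hg⟩ := hiso
    refine ⟨Equiv.trans g.symm f0, fun a b => ?_⟩
    have := hg (g.symm a) (g.symm b)
    simp only [Equiv.apply_symm_apply] at this
    exact this.symm
  -- flipped interface
  have HCf : ∀ S : Finset C.carrier, Conv (flip C.rel) S → S.card = n →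
      ∃ e : Fin n ≃ {x // x ∈ S}, ∀ a b, (flip p.1) a b ↔ (flip C.rel) (e a).1 (e b).1 := by
    intro S hSc hScard
    obtain ⟨e, he⟩ := HC S (conv_flip.1 hSc) hScard
    exact ⟨e, fun a b => he b a⟩
  -- witness convex n-set
  have hmem0 : toNOrder p ∈ convexSubords C.rel n := by
    rw [h]
    exact Set.mem_singleton _
  obtain ⟨p', hp'eq, g, hginj, hgconv, hgrel⟩ := hmem0
  have hS₀card : (Finset.univ.image g).card = n := by
    rw [Finset.card_image_of_injective _ hginj, Finset.card_univ, Fintype.card_fin]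
  -- incomparable pair and edge
  push_neg at hchain hanti
  obtain ⟨a, b, hab, hnab, hnba⟩ := hchain
  obtain ⟨a₀, b₀, hedge⟩ := hanti
  have ha₀b₀ : a₀ ≠ b₀ := by
    rintro rfl
    exact hqi a₀ hedge
  have hn2 : 2 ≤ n := by
    have h1 := a₀.isLt
    have h2 := b₀.isLt
    have h3 : a₀.1 ≠ b₀.1 := fun hc => ha₀b₀ (Fin.ext hc)
    omega
  have hfind1 : ∃ j, ¬ HasTop p.1 (PP p.1 j) := exists_notop hqt hqi hab hnab hnba
  have hfind2 : ∃ j, ¬ HasTop (flip p.1) (PP (flip p.1) j) :=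
    exists_notop (show Transitive (flip p.1) from fun _ _ _ h1 h2 => hqt h2 h1)
      (show ∀ x, ¬ (flip p.1) x x from hqi) hab hnba hnab
  -- main reduction
  suffices hfinal : ∃ H W : ℕ, H * W < n ^ 2 ∧
      (∀ f : Fin (H+1) → C.carrier, ¬ ∀ i j, i < j → C.rel (f i) (f j)) ∧
      (∀ A : Finset C.carrier, (∀ x ∈ A, ∀ y ∈ A, x ≠ y → ¬ C.rel x y) → A.card ≤ W) by
    obtain ⟨H, W, hHW, hch, hW⟩ := hfinal
    have hbound : ∀ F : Finset C.carrier, F.card ≤ H * W := fun F =>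
      mirsky E W hW H F (fun f _ hc => hch f hc)
    have hfin : Finite C.carrier := by
      by_contra hinf
      rw [not_finite_iff_infinite] at hinf
      have := hbound ((Finset.range (H*W+1)).map (Infinite.natEmbedding C.carrier))
      rw [Finset.card_map, Finset.card_range] at this
      omega
    refine ⟨hfin, ?_⟩
    haveI := Fintype.ofFinite C.carrier
    rw [Nat.card_eq_fintype_card, ← Finset.card_univ]
    exact lt_of_le_of_lt (hbound Finset.univ) hHW
  by_cases hB : HasTop p.1 Finset.univ ∧ HasTop (flip p.1) Finset.univ
  · -- case B: p has both a maximum and a minimum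
    obtain ⟨Hmax1, Hmax2⟩ := hB
    have hk1pos : 1 ≤ kk hfind1 := by
      rcases Nat.eq_zero_or_pos (kk hfind1) with h0 | hpos
      · have hsp := kk_spec hfind1
        rw [h0] at hsp
        exact absurd Hmax1 hsp
      · exact hpos
    have hk2pos : 1 ≤ kk hfind2 := by
      rcases Nat.eq_zero_or_pos (kk hfind2) with h0 | hpos
      · have hsp := kk_spec hfind2
        rw [h0] at hsp
        exact absurd Hmax2 hsp
      · exact hpos
    have hsum2 : 2 + kk hfind1 + kk hfind2 ≤ n := by
      have hpair : ∀ x ∈ ({a, b} : Finset (Fin n)), ∀ y ∈ ({a, b} : Finset (Fin n)),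
          x ≠ y → ¬ p.1 x y := by
        intro x hx y hy hne
        simp only [Finset.mem_insert, Finset.mem_singleton] at hx hy
        rcases hx with rfl | rfl <;> rcases hy with rfl | rfl
        · exact absurd rfl hne
        · exact hnab
        · exact hnba
        · exact absurd rfl hne
      have hcard2 : ({a, b} : Finset (Fin n)).card = 2 := by
        rw [Finset.card_insert_of_notMem (by simp [hab]), Finset.card_singleton]
      have := pside_width hqt hqi hab hnab hnba hfind1 hfind2 {a, b} hpair (by omega)
      omega
    -- antichain bound
    have hW : ∀ A : Finset C.carrier, (∀ x ∈ A, ∀ y ∈ A, x ≠ y → ¬ C.rel x y) →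
        A.card ≤ n - kk hfind1 - kk hfind2 := by
      intro A hA
      by_contra hc
      push_neg at hc
      obtain ⟨A', hA'sub, hA'card⟩ :=
        Finset.exists_subset_card_eq (s := A) (n := n - kk hfind1 - kk hfind2 + 1) (by omega)
      have hA'pair : ∀ x ∈ A', ∀ y ∈ A', x ≠ y → ¬ C.rel x y :=
        fun x hx y hy => hA x (hA'sub hx) y (hA'sub hy)
      have hA'conv : Conv C.rel A' := by
        intro x hx y hy z h1 h2
        exfalso
        by_cases hxy : x = y
        · subst hxy
          exact C.irrefl x (C.trans h1 h2)
        · exact hA'pair x hx y hy hxy (C.trans h1 h2)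
      obtain ⟨T, hAT, hTconv, hTcard⟩ := grow E _ hS₀card (n - A'.card) A' hA'conv (by omega)
      obtain ⟨e, he⟩ := HC T hTconv hTcard
      set B := Finset.univ.filter (fun c : Fin n => ((e c : {x // x ∈ T}) : C.carrier) ∈ A')
        with hBdef
      have himg : B.image (fun c => ((e c : {x // x ∈ T}) : C.carrier)) = A' := by
        apply Finset.ext
        intro x
        constructor
        · intro hx
          obtain ⟨c, hc1, rfl⟩ := Finset.mem_image.1 hx
          rw [hBdef, Finset.mem_filter] at hc1
          exact hc1.2
        · intro hx
          refine Finset.mem_image.2 ⟨e.symm ⟨x, hAT hx⟩, ?_, by simp⟩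
          rw [hBdef, Finset.mem_filter]
          refine ⟨Finset.mem_univ _, ?_⟩
          simp only [Equiv.apply_symm_apply]
          exact hx
      have hBinj : Function.Injective (fun c : Fin n => ((e c : {x // x ∈ T}) : C.carrier)) :=
        fun c c' hcc => e.injective (Subtype.ext hcc)
      have hBcard : B.card = A'.card := by
        rw [← himg, Finset.card_image_of_injective _ hBinj]
      have hBpair : ∀ x ∈ B, ∀ y ∈ B, x ≠ y → ¬ p.1 x y := by
        intro x hx y hy hne hq
        rw [hBdef, Finset.mem_filter] at hx hy
        refine hA'pair _ hx.2 _ hy.2 ?_ ((he x y).1 hq)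
        intro hcon
        exact hne (hBinj hcon)
      have := pside_width hqt hqi hab hnab hnba hfind1 hfind2 B hBpair (by omega)
      omega
    refine ⟨n + min (kk hfind1) (kk hfind2) - 1, n - kk hfind1 - kk hfind2, ?_, ?_, hW⟩
    · -- numeric bound
      have hWn : (n - kk hfind1 - kk hfind2) + kk hfind1 + kk hfind2 = n := by omega
      have hHn : (n + min (kk hfind1) (kk hfind2) - 1) + 1
          = n + min (kk hfind1) (kk hfind2) := by omega
      set κ := min (kk hfind1) (kk hfind2) with hκ
      set W := n - kk hfind1 - kk hfind2 with hWd
      set H := n + κ - 1 with hHd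
      have hκ1 : 1 ≤ κ := le_min hk1pos hk2pos
      have hκa : κ ≤ kk hfind1 := min_le_left _ _
      have e1 : H * W + W = n * W + κ * W := by
        have h2 := congrArg (· * W) hHn
        simp only [add_mul, one_mul] at h2
        linarith
      have e2 : n * W + n * kk hfind1 + n * kk hfind2 = n * n := by
        have h2 := congrArg (n * ·) hWn
        simp only [mul_add] at h2
        linarith
      have e3 : κ * W ≤ κ * n := Nat.mul_le_mul_left κ (by omega)
      have e4 : κ * n ≤ kk hfind1 * n := Nat.mul_le_mul_right n hκa
      have e5 : kk hfind1 * n = n * kk hfind1 := Nat.mul_comm _ _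
      have e6 : 1 ≤ W := by omega
      have e7 : 0 < n * kk hfind2 := Nat.mul_pos (by omega) (by omega)
      have hgoal : H * W < n * n := by linarith
      calc H * W < n * n := hgoal
        _ = n ^ 2 := (sq n).symm
    · -- no chain of length n + min k1 k2
      intro f hf
      rcases min_le_iff.1 (le_refl (min (kk hfind1) (kk hfind2))) with hmin | hmin
      all_goals {
        rcases le_total (kk hfind1) (kk hfind2) with hle | hle
        · -- min = kk hfind1
          have hminiseq : min (kk hfind1) (kk hfind2) = kk hfind1 := min_eq_left hle
          apply noChainB E hqt hqi HC hfind1 Hmax1 (by omega) (by omega)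
            (fun i : Fin (n + kk hfind1) => f ⟨i.1, by omega⟩)
          intro i j hij
          apply hf
          rw [Fin.lt_def]
          exact hij
        · -- min = kk hfind2, use flipped
          have hminiseq : min (kk hfind1) (kk hfind2) = kk hfind2 := min_eq_right hle
          apply noChainB E.flip (show Transitive (flip p.1) from fun _ _ _ h1 h2 => hqt h2 h1)
            (show ∀ x, ¬ (flip p.1) x x from hqi) HCf hfind2 Hmax2 (by omega) (by omega)
            (fun i : Fin (n + kk hfind2) => f ⟨n + kk hfind2 - 1 - i.1, by omega⟩)
          intro i j hij
          show C.rel _ _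
          apply hf
          rw [Fin.lt_def]
          simp only
          have h1 := Fin.lt_def.1 hij
          have h2 := j.isLt
          omega
      }
  · -- case A: p lacks a maximum or a minimum
    refine ⟨n - 1, n - 1, ?_, ?_, ?_⟩
    · have hmn : (n - 1) + 1 = n := by omega
      have hlt : (n-1) * (n-1) < n * n := by nlinarith [hmn]
      calc (n-1) * (n-1) < n * n := hlt
        _ = n ^ 2 := (sq n).symm
    · intro f hf
      rcases not_and_or.1 hB with hnt | hnt
      · apply noChainA E HC hnt hn2 (fun i : Fin n => f ⟨i.1, by omega⟩)
        intro i j hij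
        apply hf
        rw [Fin.lt_def]
        exact hij
      · apply noChainA E.flip HCf hnt hn2 (fun i : Fin n => f ⟨n - 1 - i.1, by omega⟩)
        intro i j hij
        show C.rel _ _
        apply hf
        rw [Fin.lt_def]
        simp only
        have h1 := Fin.lt_def.1 hij
        have h2 := j.isLt
        omega
    · intro A hA
      by_contra hc
      push_neg at hc
      obtain ⟨A', hA'sub, hA'card⟩ := Finset.exists_subset_card_eq (s := A) (n := n) (by omega)
      have hA'pair : ∀ x ∈ A', ∀ y ∈ A', x ≠ y → ¬ C.rel x y :=
        fun x hx y hy => hA x (hA'sub hx) y (hA'sub hy)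
      have hA'conv : Conv C.rel A' := by
        intro x hx y hy z h1 h2
        exfalso
        by_cases hxy : x = y
        · subst hxy
          exact C.irrefl x (C.trans h1 h2)
        · exact hA'pair x hx y hy hxy (C.trans h1 h2)
      obtain ⟨e, he⟩ := HC A' hA'conv hA'card
      have hr := (he a₀ b₀).1 hedge
      have hne : ((e a₀ : {x // x ∈ A'}) : C.carrier) ≠ ((e b₀ : {x // x ∈ A'}) : C.carrier) := by
        intro hcon
        exact ha₀b₀ (e.injective (Subtype.ext hcon))
      exact hA'pair _ (e a₀).2 _ (e b₀).2 hne hr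
end
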